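/- For d = 2, the quasicode A* with A*_i = C(n,i) for even i and A*_i = 0 for odd i is the unique optimum of the (n,2) Delsarte linear program, with optimal value 2^{n−1}. -/

import Mathlib

open Finset

/-- Integer binomial coefficient with convention C(a,b)=0 unless 0 ≤ b ≤ a. -/
def intChoose (a b : ℤ) : ℤ :=
  if 0 ≤ a ∧ 0 ≤ b then (a.toNat.choose b.toNat : ℤ) else 0

/-- Krawtchouk polynomial K_j(i;n) = Σ_{k=0}^{j} (-1)^k C(i,k) C(n-i,j-k),
with the convention K_j(i;n)=0 if j ∉ [0,n] or i ∉ [0,n]. -/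
def kraw (n : ℕ) (j i : ℤ) : ℤ :=
  ∑ k ∈ Finset.range (j.toNat + 1),
    (-1) ^ k * intChoose i k * intChoose ((n : ℤ) - i) (j - k)

/-- Feasibility for the (n,d) Delsarte linear program: A_0 = 1, A_i = 0 for
1 ≤ i ≤ d-1, A_i ≥ 0 for i ≤ n, and the Delsarte inequalities
Σ_{i=0}^{n} A_i K_j(i;n) ≥ 0 for all 1 ≤ j ≤ n. -/
def delsarteFeasible (n d : ℕ) (A : ℕ → ℚ) : Prop :=
  A 0 = 1 ∧ (∀ i : ℕ, 1 ≤ i → i ≤ d - 1 → A i = 0) ∧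
    (∀ i : ℕ, i ≤ n → 0 ≤ A i) ∧
    ∀ j : ℕ, 1 ≤ j → j ≤ n →
      0 ≤ ∑ i ∈ Finset.range (n + 1), A i * (kraw n j i : ℚ)


open Polynomial

def Kz (n j i : ℕ) : ℤ :=
  ∑ k ∈ Finset.range (j + 1), (-1) ^ k * (i.choose k : ℤ) * ((n - i).choose (j - k) : ℤ)

lemma kraw_eq (n j i : ℕ) (hi : i ≤ n) : kraw n j i = Kz n j i := by
  unfold kraw Kz
  rw [Int.toNat_natCast]
  refine Finset.sum_congr rfl fun k hk => ?_
  simp only [Finset.mem_range, Nat.lt_succ_iff] at hk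
  have h1 : intChoose (i : ℤ) (k : ℤ) = (i.choose k : ℤ) := by
    simp [intChoose]
  have h2 : intChoose ((n : ℤ) - i) ((j : ℤ) - k) = ((n - i).choose (j - k) : ℤ) := by
    have e1 : (n : ℤ) - i = ((n - i : ℕ) : ℤ) := by omega
    have e2 : (j : ℤ) - k = ((j - k : ℕ) : ℤ) := by omega
    rw [e1, e2]
    simp [intChoose]
  rw [h1, h2]

lemma Kz_left_zero (n j : ℕ) : Kz n j 0 = n.choose j := by
  unfold Kz
  rw [Finset.sum_eq_single 0]
  · simp
  · intro k hk hk0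
    simp [Nat.choose_eq_zero_of_lt (Nat.pos_of_ne_zero hk0)]
  · simp

lemma Kz_zero (n i : ℕ) : Kz n 0 i = 1 := by simp [Kz]

lemma Kz_left_n (n j : ℕ) (hj : j ≤ n) : Kz n j n = (-1) ^ j * n.choose j := by
  unfold Kz
  rw [Finset.sum_eq_single j]
  · simp
  · intro k hk hkj
    simp only [Finset.mem_range, Nat.lt_succ_iff] at hk
    have : j - k ≠ 0 := by omega
    simp [Nat.sub_self, Nat.choose_eq_zero_of_lt (Nat.pos_of_ne_zero this)]
  · simp

lemma Kz_eq_zero (n j i : ℕ) (hi : i ≤ n) (hj : n < j) : Kz n j i = 0 := by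
  unfold Kz
  refine Finset.sum_eq_zero fun k hk => ?_
  rcases le_or_gt k i with h | h
  · have : n - i < j - k := by omega
    simp [Nat.choose_eq_zero_of_lt this]
  · simp [Nat.choose_eq_zero_of_lt h]

lemma Kz_pascal (n j i : ℕ) : Kz (n+1) (j+1) (i+1) = Kz n (j+1) i - Kz n j i := by
  unfold Kz
  rw [Finset.sum_range_succ' (fun k => (-1:ℤ) ^ k * ((i+1).choose k : ℤ) * ((n+1-(i+1)).choose (j+1-k) : ℤ))]
  have hsub : n + 1 - (i + 1) = n - i := by omega
  simp only [hsub, Nat.choose_zero_right, Nat.cast_one, pow_zero, one_mul, Nat.sub_zero]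
  have hsplit : ∀ k ∈ Finset.range (j+1),
      (-1:ℤ) ^ (k+1) * ((i+1).choose (k+1) : ℤ) * ((n-i).choose (j+1-(k+1)) : ℤ)
      = (-1:ℤ) ^ (k+1) * (i.choose (k+1) : ℤ) * ((n-i).choose (j+1-(k+1)) : ℤ)
        + (-(-1:ℤ) ^ k * (i.choose k : ℤ) * ((n-i).choose (j-k) : ℤ)) := by
    intro k hk
    have : (i+1).choose (k+1) = i.choose k + i.choose (k+1) := Nat.choose_succ_succ i k
    rw [this]
    have : j + 1 - (k + 1) = j - k := by omega
    rw [this]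
    push_cast
    ring
  rw [Finset.sum_congr rfl hsplit, Finset.sum_add_distrib]
  rw [Finset.sum_range_succ' (fun k => (-1:ℤ) ^ k * (i.choose k : ℤ) * ((n-i).choose (j+1-k) : ℤ))]
  simp only [Nat.choose_zero_right, Nat.cast_one, pow_zero, one_mul, Nat.sub_zero]
  ring_nf
  have hneg : ∑ x ∈ Finset.range (1+j), -(((i.choose x : ℤ)) * (((n-i).choose (j-x) : ℤ)) * (-1:ℤ)^x)
      = - ∑ x ∈ Finset.range (1+j), ((i.choose x : ℤ)) * (((n-i).choose (j-x) : ℤ)) * (-1:ℤ)^x := by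
    rw [← Finset.sum_neg_distrib]
  rw [hneg]
  ring

lemma coeff_one_sub_X_pow (m k : ℕ) :
    ((1 - X : ℚ[X]) ^ m).coeff k = (-1) ^ k * (m.choose k : ℚ) := by
  have h : (1 - X : ℚ[X]) = (-1) * (X + C (-1)) := by
    rw [C_neg, C_1]; ring
  rw [h, mul_pow]
  have h2 : (((-1 : ℚ[X]) ^ m) * (X + C (-1) : ℚ[X]) ^ m).coeff k
      = (-1 : ℚ) ^ m * ((X + C (-1) : ℚ[X]) ^ m).coeff k := by
    rw [← C_1 (R := ℚ), ← C_neg, ← C_pow, coeff_C_mul]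
  rw [h2, coeff_X_add_C_pow]
  rcases le_or_gt k m with hk | hk
  · have h3 : (-1 : ℚ) ^ m = (-1) ^ (m - k) * (-1) ^ k := by
      rw [← pow_add]; congr 1; omega
    have h4 : ((-1 : ℚ)) ^ (m - k) * (-1) ^ (m - k) = 1 := by
      rw [← pow_add]; exact Even.neg_one_pow ⟨m - k, rfl⟩
    rw [h3]
    push_cast
    linear_combination ((m.choose k : ℚ) * (-1 : ℚ) ^ k) * h4
  · simp [Nat.choose_eq_zero_of_lt hk]

lemma coeff_Kz (n j i : ℕ) :
    (((1 - X) ^ i * (1 + X) ^ (n - i) : ℚ[X])).coeff j = (Kz n j i : ℚ) := by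
  rw [coeff_mul, Finset.Nat.sum_antidiagonal_eq_sum_range_succ_mk]
  unfold Kz
  push_cast
  refine Finset.sum_congr rfl fun k hk => ?_
  rw [coeff_one_sub_X_pow, coeff_one_add_X_pow]

lemma C_two : (C (2:ℚ) : ℚ[X]) = 2 := by
  rw [show (2:ℚ) = 1 + 1 by norm_num, C_add, C_1, one_add_one_eq_two]

lemma row_choose (n : ℕ) :
    ∑ j ∈ range (n+1), C ((n.choose j : ℚ)) * ((1 - X)^j * (1 + X)^(n - j)) = C ((2:ℚ)^n) := by
  have h := add_pow (1 - X : ℚ[X]) (1 + X) n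
  have h2 : ((1 - X) + (1 + X) : ℚ[X]) = 2 := by ring
  have h3 : C ((2:ℚ)^n) = (2 : ℚ[X])^n := by
    rw [C_pow, C_two]
  rw [h2] at h
  rw [h3, h]
  refine Finset.sum_congr rfl fun j hj => ?_
  rw [C_eq_natCast]
  ring

lemma inv_poly (n : ℕ) : ∀ i : ℕ, i ≤ n →
    ∑ j ∈ range (n+1), C ((Kz n j i : ℚ)) * ((1 - X)^j * (1 + X)^(n - j))
      = C ((2:ℚ)^n) * X^i := by
  induction n with
  | zero =>
    intro i hi
    interval_cases i
    simp [Kz_zero]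
  | succ n ih =>
    intro i hi
    match i with
    | 0 =>
      simp only [Kz_left_zero]
      push_cast
      rw [row_choose (n+1)]
      simp
    | (i+1) =>
      have hi' : i ≤ n := by omega
      set g : ℕ → ℚ[X] := fun j => C ((Kz n j i : ℚ)) * ((1 - X)^j * (1 + X)^(n - j)) with hgdef
      have h4 : ∑ j ∈ range (n+1), g j = C ((2:ℚ)^n) * X^i := ih i hi'
      have hg : ∑ j ∈ range (n+1), g (j+1) = C ((2:ℚ)^n) * X^i - g 0 := by
        have h := Finset.sum_range_succ' g (n+1)
        have h2 := Finset.sum_range_succ g (n+1)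
        have h3 : g (n+1) = 0 := by
          simp [hgdef, Kz_eq_zero n (n+1) i hi' (by omega)]
        linear_combination h2 - h + h4 + h3
      rw [Finset.sum_range_succ' (fun j => C ((Kz (n+1) j (i+1) : ℚ)) * ((1 - X)^j * (1 + X)^(n + 1 - j)))]
      have esplit : ∀ j ∈ range (n+1),
          C ((Kz (n+1) (j+1) (i+1) : ℚ)) * ((1 - X)^(j+1) * (1 + X)^(n + 1 - (j+1)))
          = (1 + X) * g (j+1) - (1 - X) * g j := by
        intro j hj
        simp only [Finset.mem_range] at hj
        rw [Kz_pascal, Int.cast_sub, C_sub, hgdef]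
        simp only []
        rcases Nat.lt_or_ge j n with h1 | h1
        · have e1 : n + 1 - (j + 1) = n - j := by omega
          have e2 : n - (j+1) + 1 = n - j := by omega
          have e3 : n - j = (n - (j+1)) + 1 := by omega
          rw [e1, e3, pow_succ, pow_succ]
          ring
        · have hjn : j = n := by omega
          rw [Kz_eq_zero n (j+1) i hi' (by omega)]
          have e1 : n + 1 - (j + 1) = 0 := by omega
          have e2 : n - j = 0 := by omega
          have e3 : n - (j+1) = 0 := by omega
          rw [e1, e2, e3, pow_succ]
          push_cast
          simp only [map_zero]
          ring
      rw [Finset.sum_congr rfl esplit, Finset.sum_sub_distrib, ← Finset.mul_sum, ← Finset.mul_sum]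
      rw [hg, h4]
      have e0 : C ((Kz (n+1) 0 (i+1) : ℚ)) * ((1 - X)^0 * (1 + X)^(n + 1 - 0))
          = (1 + X) * g 0 := by
        simp only [hgdef]
        rw [Kz_zero, Kz_zero]
        simp only [Nat.sub_zero, pow_zero, Int.cast_one, map_one, one_mul, pow_succ]
        ring
      rw [e0]
      have hC : C ((2:ℚ)^(n+1)) = C ((2:ℚ)^n) * 2 := by
        rw [pow_succ, C_mul, C_two]
      rw [hC, pow_succ]
      ring

lemma Kz_orth (n m l : ℕ) (hl : l ≤ n) :
    ∑ j ∈ range (n+1), (Kz n j l : ℚ) * (Kz n m j : ℚ) = if m = l then 2^n else 0 := by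
  have h := congrArg (fun p : ℚ[X] => p.coeff m) (inv_poly n l hl)
  simp only [finset_sum_coeff, coeff_C_mul, coeff_X_pow] at h
  calc ∑ j ∈ range (n+1), (Kz n j l : ℚ) * (Kz n m j : ℚ)
      = ∑ j ∈ range (n+1), (Kz n j l : ℚ) * ((1 - X : ℚ[X])^j * (1 + X)^(n - j)).coeff m := by
        refine Finset.sum_congr rfl fun j hj => ?_
        rw [coeff_Kz n m j]
    _ = if m = l then 2^n else 0 := by
        rw [h]; split <;> simp

lemma Kz_col_sum (n i : ℕ) (hi : i ≤ n) :
    ∑ j ∈ range (n+1), (Kz n j i : ℚ) = if i = 0 then 2^n else 0 := by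
  have h := congrArg (fun p : ℚ[X] => p.eval 0) (inv_poly n i hi)
  simp only [eval_finset_sum, eval_mul, eval_C, eval_pow, eval_add, eval_sub, eval_X, eval_one,
    sub_zero, add_zero, one_pow, mul_one] at h
  rw [h]
  rcases Nat.eq_zero_or_pos i with h0 | h0
  · simp [h0]
  · rw [zero_pow (by omega), if_neg (by omega)]
    ring

lemma Kz_col_wsum (n i : ℕ) (hi : i ≤ n) :
    ∑ j ∈ range (n+1), ((n:ℚ) - 2*j) * (Kz n j i : ℚ) = if i = 1 then 2^n else 0 := by
  have h := congrArg (fun p : ℚ[X] => (derivative p).eval 0) (inv_poly n i hi)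
  simp only [derivative_sum, derivative_C_mul, derivative_mul, derivative_pow,
    derivative_sub, derivative_add, derivative_one, derivative_X, zero_sub, zero_add,
    eval_finset_sum, eval_mul, eval_C, eval_pow, eval_add, eval_sub, eval_X, eval_one,
    sub_zero, add_zero, one_pow, mul_one, eval_neg, eval_natCast, mul_neg,
    derivative_C, eval_zero, zero_mul, zero_add, one_mul] at h
  calc ∑ j ∈ range (n+1), ((n:ℚ) - 2*j) * (Kz n j i : ℚ)
      = ∑ j ∈ range (n+1), (Kz n j i : ℚ) * (-(j:ℚ) + ((n - j : ℕ) : ℚ)) := by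
        refine Finset.sum_congr rfl fun j hj => ?_
        simp only [Finset.mem_range, Nat.lt_succ_iff] at hj
        rw [Nat.cast_sub hj]
        ring
    _ = if i = 1 then 2^n else 0 := by
        rw [h]
        match i with
        | 0 => simp
        | 1 => simp
        | (k+2) => simp [zero_pow]

lemma row_alt (n : ℕ) :
    ∑ i ∈ range (n+1), C ((-1)^i * (n.choose i : ℚ)) * ((1 - X)^i * (1 + X)^(n - i))
      = C ((2:ℚ)^n) * X^n := by
  have h := add_pow (X - 1 : ℚ[X]) (X + 1) n
  have h2 : ((X - 1) + (X + 1) : ℚ[X]) = 2 * X := by ring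
  rw [h2, mul_pow] at h
  rw [C_pow, C_two, h]
  refine Finset.sum_congr rfl fun i hi => ?_
  rw [map_mul, C_eq_natCast, show ((-1:ℚ))^i = ((-1)^i : ℚ) from rfl]
  have hC : (C ((-1:ℚ)^i) : ℚ[X]) = (-1)^i := by
    rw [show ((-1:ℚ))^i = ((-1:ℚ))^i from rfl, map_pow, map_neg, C_1]
  rw [hC, show (X - 1 : ℚ[X]) = (-1) * (1 - X) by ring, mul_pow]
  ring

lemma forward_choose (n j : ℕ) :
    ∑ i ∈ range (n+1), (n.choose i : ℚ) * (Kz n j i : ℚ) = if j = 0 then 2^n else 0 := by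
  have h := congrArg (fun p : ℚ[X] => p.coeff j) (row_choose n)
  simp only [finset_sum_coeff, coeff_C_mul, coeff_C] at h
  calc ∑ i ∈ range (n+1), (n.choose i : ℚ) * (Kz n j i : ℚ)
      = ∑ i ∈ range (n+1), (n.choose i : ℚ) * ((1 - X : ℚ[X])^i * (1 + X)^(n - i)).coeff j := by
        refine Finset.sum_congr rfl fun i hi => ?_
        rw [coeff_Kz n j i]
    _ = if j = 0 then 2^n else 0 := by rw [h]

lemma forward_alt (n j : ℕ) :
    ∑ i ∈ range (n+1), (-1)^i * (n.choose i : ℚ) * (Kz n j i : ℚ) = if j = n then 2^n else 0 := by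
  have h := congrArg (fun p : ℚ[X] => p.coeff j) (row_alt n)
  simp only [finset_sum_coeff, coeff_C_mul, coeff_X_pow] at h
  calc ∑ i ∈ range (n+1), (-1)^i * (n.choose i : ℚ) * (Kz n j i : ℚ)
      = ∑ i ∈ range (n+1), (-1)^i * (n.choose i : ℚ) * ((1 - X : ℚ[X])^i * (1 + X)^(n - i)).coeff j := by
        refine Finset.sum_congr rfl fun i hi => ?_
        rw [coeff_Kz n j i]
    _ = if j = n then 2^n else 0 := by rw [h]; split <;> simp

lemma swap_sum (N M : ℕ) (c A : ℕ → ℚ) (K : ℕ → ℕ → ℚ) :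
    ∑ j ∈ range N, c j * ∑ i ∈ range M, A i * K j i
      = ∑ i ∈ range M, A i * ∑ j ∈ range N, c j * K j i := by
  simp_rw [Finset.mul_sum]
  rw [Finset.sum_comm]
  refine Finset.sum_congr rfl fun i _ => Finset.sum_congr rfl fun j _ => by ring

/-- For a feasible A, the kraw sums equal Kz sums. -/
lemma sum_kraw_eq_sum_Kz (n j : ℕ) (A : ℕ → ℚ) :
    ∑ i ∈ Finset.range (n + 1), A i * (kraw n j i : ℚ)
      = ∑ i ∈ Finset.range (n + 1), A i * (Kz n j i : ℚ) := by
  refine Finset.sum_congr rfl fun i hi => ?_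
  simp only [Finset.mem_range, Nat.lt_succ_iff] at hi
  rw [kraw_eq n j i hi]

/-- For d = 2: the quasicode A*_i = C(n,i) for even i and 0 for odd i is the unique
optimum of the (n,2) Delsarte LP, with optimal value 2^{n-1}. -/
theorem d_eq_two_unique_optimum (n : ℕ) (hn : 2 ≤ n) :
    IsGreatest {v : ℚ | ∃ A : ℕ → ℚ, delsarteFeasible n 2 A ∧
        v = ∑ i ∈ Finset.range (n + 1), A i} (2 ^ (n - 1)) ∧
    ∀ A : ℕ → ℚ, delsarteFeasible n 2 A →
      (∑ i ∈ Finset.range (n + 1), A i) = 2 ^ (n - 1) →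
      ∀ i : ℕ, i ≤ n → A i = if Even i then (n.choose i : ℚ) else 0 := by
  have h2n : (2:ℚ)^n = 2^(n-1) * 2 := by
    rw [← pow_succ]; congr 1; omega
  -- The S-transform of any A
  set S : (ℕ → ℚ) → ℕ → ℚ := fun A j => ∑ i ∈ Finset.range (n + 1), A i * (Kz n j i : ℚ)
    with hSdef
  -- S A 0 is the total sum
  have hS0 : ∀ A : ℕ → ℚ, S A 0 = ∑ i ∈ Finset.range (n + 1), A i := by
    intro A
    refine Finset.sum_congr rfl fun i _ => ?_
    rw [Kz_zero]
    simp
  -- key identity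
  have hkey : ∀ A : ℕ → ℚ, A 0 = 1 → A 1 = 0 →
      ∑ j ∈ range (n+1), ((n:ℚ) - j) * S A j = n * 2^(n-1) := by
    intro A hA0 hA1
    rw [hSdef]
    rw [swap_sum (n+1) (n+1) (fun j => (n:ℚ) - j) A (fun j i => (Kz n j i : ℚ))]
    have hw : ∀ i ∈ range (n+1), A i * ∑ j ∈ range (n+1), ((n:ℚ) - j) * (Kz n j i : ℚ)
        = A i * ((if i = 1 then 2^(n-1) else 0) + (if i = 0 then (n:ℚ) * 2^(n-1) else 0)) := by
      intro i hi
      simp only [Finset.mem_range, Nat.lt_succ_iff] at hi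
      congr 1
      have e1 : ∀ j, ((n:ℚ) - j) = (1/2) * ((n:ℚ) - 2*j) + (1/2) * n := by intro j; ring
      calc ∑ j ∈ range (n+1), ((n:ℚ) - j) * (Kz n j i : ℚ)
          = ∑ j ∈ range (n+1), ((1/2) * (((n:ℚ) - 2*j) * (Kz n j i : ℚ))
              + ((1/2) * n) * (Kz n j i : ℚ)) := by
            refine Finset.sum_congr rfl fun j _ => by ring
        _ = (1/2) * (∑ j ∈ range (n+1), ((n:ℚ) - 2*j) * (Kz n j i : ℚ))
              + ((1/2) * n) * ∑ j ∈ range (n+1), (Kz n j i : ℚ) := by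
            rw [Finset.sum_add_distrib, Finset.mul_sum, Finset.mul_sum]
        _ = (if i = 1 then 2^(n-1) else 0) + (if i = 0 then (n:ℚ) * 2^(n-1) else 0) := by
            rw [Kz_col_sum n i hi, Kz_col_wsum n i hi]
            split <;> split <;> simp_all <;> ring
    rw [Finset.sum_congr rfl hw]
    -- only i = 0, 1 contribute
    have hz : ∀ i ∈ range (n+1), i ∉ range 2 →
        A i * ((if i = 1 then 2^(n-1) else 0) + (if i = 0 then (n:ℚ) * 2^(n-1) else 0)) = 0 := by
      intro i _ hi2
      simp only [Finset.mem_range] at hi2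
      rw [if_neg (by omega), if_neg (by omega)]
      simp
    rw [← Finset.sum_subset (Finset.range_subset_range.2 (by omega)) hz]
    rw [Finset.sum_range_succ, Finset.sum_range_one, hA0, hA1]
    norm_num
  -- nonnegativity of S for feasible A
  have hSnn : ∀ A : ℕ → ℚ, delsarteFeasible n 2 A → ∀ j, 1 ≤ j → j ≤ n → 0 ≤ S A j := by
    intro A hA j h1 h2
    have := hA.2.2.2 j h1 h2
    rwa [sum_kraw_eq_sum_Kz] at this
  -- upper bound
  have hUB : ∀ A : ℕ → ℚ, delsarteFeasible n 2 A →
      ∑ i ∈ Finset.range (n + 1), A i ≤ 2^(n-1) := by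
    intro A hA
    have hk := hkey A hA.1 (hA.2.1 1 le_rfl le_rfl)
    rw [Finset.sum_range_succ' (fun j => ((n:ℚ) - j) * S A j) n] at hk
    have hmid : 0 ≤ ∑ j ∈ range n, ((n:ℚ) - (j+1)) * S A (j+1) := by
      refine Finset.sum_nonneg fun j hj => ?_
      simp only [Finset.mem_range] at hj
      have h1 : (0:ℚ) ≤ (n:ℚ) - (j+1) := by
        have : (j:ℚ) + 1 ≤ n := by exact_mod_cast Nat.succ_le_of_lt hj
        linarith
      exact mul_nonneg h1 (hSnn A hA (j+1) (by omega) (by omega))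
    have hS0' : ((n:ℚ) - 0) * S A 0 ≤ n * 2^(n-1) := by
      push_cast at hk ⊢
      linarith
    have hnpos : (0:ℚ) < n := by
      exact_mod_cast Nat.lt_of_lt_of_le (by norm_num) hn
    rw [← hS0 A]
    nlinarith [hS0']
  -- the optimal quasicode
  set Astar : ℕ → ℚ := fun i => if Even i then (n.choose i : ℚ) else 0 with hAstar
  have hAstarS : ∀ j : ℕ, S Astar j
      = (1/2) * (if j = 0 then 2^n else 0) + (1/2) * (if j = n then 2^n else 0) := by
    intro j
    rw [hSdef]
    calc ∑ i ∈ Finset.range (n + 1), Astar i * (Kz n j i : ℚ)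
        = ∑ i ∈ Finset.range (n + 1), ((1/2) * ((n.choose i : ℚ) * (Kz n j i : ℚ))
            + (1/2) * ((-1)^i * (n.choose i : ℚ) * (Kz n j i : ℚ))) := by
          refine Finset.sum_congr rfl fun i _ => ?_
          simp only [hAstar]
          rcases Nat.even_or_odd i with he | ho
          · rw [if_pos he, he.neg_one_pow]; ring
          · rw [if_neg (Nat.not_even_iff_odd.2 ho), ho.neg_one_pow]; ring
      _ = (1/2) * (if j = 0 then 2^n else 0) + (1/2) * (if j = n then 2^n else 0) := by
          rw [Finset.sum_add_distrib, ← Finset.mul_sum, ← Finset.mul_sum,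
            forward_choose, forward_alt]
  have hAstarFeas : delsarteFeasible n 2 Astar := by
    refine ⟨by simp [hAstar], fun i h1 h2 => ?_, fun i _ => ?_, fun j h1 h2 => ?_⟩
    · have : i = 1 := by omega
      subst this
      simp [hAstar]
    · rw [hAstar]; dsimp only; split <;> positivity
    · rw [sum_kraw_eq_sum_Kz]
      show 0 ≤ S Astar j
      rw [hAstarS j]
      split <;> split <;> positivity
  have hAstarVal : ∑ i ∈ Finset.range (n + 1), Astar i = 2^(n-1) := by
    rw [← hS0 Astar, hAstarS 0, if_pos rfl, if_neg (by omega), h2n]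
    ring
  constructor
  · constructor
    · exact ⟨Astar, hAstarFeas, hAstarVal.symm⟩
    · rintro v ⟨A, hA, rfl⟩
      exact hUB A hA
  · -- uniqueness
    intro A hA hsum m hm
    have hA1 : A 1 = 0 := hA.2.1 1 le_rfl le_rfl
    have hS0A : S A 0 = 2^(n-1) := by rw [hS0 A, hsum]
    -- middle S vanish
    have hk := hkey A hA.1 hA1
    rw [Finset.sum_range_succ' (fun j => ((n:ℚ) - j) * S A j) n] at hk
    have hmid0 : ∑ j ∈ range n, ((n:ℚ) - (j+1)) * S A (j+1) = 0 := by
      have : ((n:ℚ) - 0) * S A 0 = n * 2^(n-1) := by rw [hS0A]; ring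
      push_cast at hk
      push_cast
      linarith
    have hterm : ∀ j ∈ range n, ((n:ℚ) - (j+1)) * S A (j+1) = 0 := by
      have hnn : ∀ j ∈ range n, 0 ≤ ((n:ℚ) - (j+1)) * S A (j+1) := by
        intro j hj
        simp only [Finset.mem_range] at hj
        have h1 : (0:ℚ) ≤ (n:ℚ) - (j+1) := by
          have : (j:ℚ) + 1 ≤ n := by exact_mod_cast Nat.succ_le_of_lt hj
          linarith
        exact mul_nonneg h1 (hSnn A hA (j+1) (by omega) (by omega))
      intro j hj
      exact (Finset.sum_eq_zero_iff_of_nonneg hnn).1 hmid0 j hj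
    have hSmid : ∀ j : ℕ, 1 ≤ j → j < n → S A j = 0 := by
      intro j h1 h2
      have hthis := hterm (j-1) (by simp; omega)
      have hej : j - 1 + 1 = j := by omega
      rw [hej, Nat.cast_sub h1] at hthis
      have h4 : ((n:ℚ) - (j:ℚ)) * S A j = 0 := by
        push_cast at hthis
        linear_combination hthis
      have hne : ((n:ℚ) - j) ≠ 0 := by
        have : (j:ℚ) < n := by exact_mod_cast h2
        intro hc
        linarith
      exact (mul_eq_zero.1 h4).resolve_left hne
    -- inversion
    have hinv : ∀ m : ℕ, m ≤ n →
        ∑ j ∈ range (n+1), (Kz n m j : ℚ) * S A j = 2^n * A m := by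
      intro m hm
      rw [hSdef]
      rw [swap_sum (n+1) (n+1) (fun j => (Kz n m j : ℚ)) A (fun j i => (Kz n j i : ℚ))]
      have : ∀ i ∈ range (n+1), A i * ∑ j ∈ range (n+1), (Kz n m j : ℚ) * (Kz n j i : ℚ)
          = A i * (if m = i then 2^n else 0) := by
        intro i hi
        simp only [Finset.mem_range, Nat.lt_succ_iff] at hi
        congr 1
        rw [← Kz_orth n m i hi]
        refine Finset.sum_congr rfl fun j _ => by ring
      rw [Finset.sum_congr rfl this]
      have h5 : ∀ x ∈ range (n+1), (A x * if m = x then (2:ℚ)^n else 0)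
          = if m = x then 2^n * A x else 0 := by
        intro x _
        split <;> ring
      rw [Finset.sum_congr rfl h5, Finset.sum_ite_eq (range (n+1)) m (fun x => (2:ℚ)^n * A x),
        if_pos (by simp; omega)]
    -- split the inversion sum into j = 0 and j = n contributions
    have hsplit : ∀ m : ℕ, m ≤ n →
        2^n * A m = (Kz n m 0 : ℚ) * S A 0 + (Kz n m n : ℚ) * S A n := by
      intro m hm
      rw [← hinv m hm, Finset.sum_range_succ]
      have hnn1 : n - 1 + 1 = n := by omega
      have hmidsum : ∑ j ∈ range n, (Kz n m j : ℚ) * S A j = (Kz n m 0 : ℚ) * S A 0 := by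
        have h := Finset.sum_range_succ' (fun j => (Kz n m j : ℚ) * S A j) (n-1)
        rw [hnn1] at h
        rw [h]
        have hz : ∑ j ∈ range (n-1), (Kz n m (j+1) : ℚ) * S A (j+1) = 0 :=
          Finset.sum_eq_zero fun j hj => by
            simp only [Finset.mem_range] at hj
            rw [hSmid (j+1) (by omega) (by omega), mul_zero]
        rw [hz, zero_add]
      rw [hmidsum]
    have hnne : (n:ℚ) ≠ 0 := by
      have : (0:ℚ) < n := by exact_mod_cast Nat.lt_of_lt_of_le (by norm_num) hn
      linarith
    have hSn : S A n = 2^(n-1) := by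
      have h1 := hsplit 1 (by omega)
      rw [hA1, hS0A, Kz_left_zero, Kz_left_n n 1 (by omega), Nat.choose_one_right] at h1
      push_cast at h1
      have h2 : (n:ℚ) * S A n = (n:ℚ) * 2^(n-1) := by linarith
      exact mul_left_cancel₀ hnne h2
    have hm2 := hsplit m hm
    rw [hS0A, hSn, Kz_left_zero, Kz_left_n n m hm] at hm2
    push_cast at hm2
    have hpne : ((2:ℚ)^n) ≠ 0 := by positivity
    rcases Nat.even_or_odd m with he | ho
    · rw [if_pos he]
      rw [he.neg_one_pow] at hm2
      refine mul_left_cancel₀ hpne ?_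
      rw [hm2, h2n]
      ring
    · rw [if_neg (Nat.not_even_iff_odd.2 ho)]
      rw [ho.neg_one_pow] at hm2
      refine mul_left_cancel₀ hpne ?_
      rw [hm2]
      ring
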